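/- For any finite subset ξ of ⟦n⟧_j with j > 0, the faces of the extension ξ⊙ satisfy: if j is even, (ξ⊙)⁺ = (ξ⁺)⊙ ∪ ξ⊕ and (ξ⊙)⁻ = (ξ⁻)⊙ ∪ ξ⊖; if j is odd, (ξ⊙)⁺ = (ξ⁺)⊙ ∪ ξ⊖ and (ξ⊙)⁻ = (ξ⁻)⊙ ∪ ξ⊕. Moreover (ξη)^ε = (ξ^ε)η for η ∈ {⊖, ⊕} and ε ∈ {+,−}. -/

import Mathlib

/-- The three symbols `⊖`, `⊙`, `⊕`. -/
inductive CSym : Type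
  | minus : CSym
  | mid : CSym
  | plus : CSym
deriving DecidableEq

/-- `Str n j` is `⟦n⟧_j`: strings of length `n` over `{⊖,⊙,⊕}` with exactly `j`
occurrences of `⊙`. -/
def Str (n j : ℕ) : Type := {l : List CSym // l.length = n ∧ l.count CSym.mid = j}

/-- The even faces `a⁺` of `a ∈ ⟦n⟧_{j+1}`: replace the `i`-th occurrence of `⊙`
by `⊕` if `i` is odd (i.e. the number of earlier `⊙`'s is even), and by `⊖` if
`i` is even. -/
def posF {n j : ℕ} (a : Str n (j+1)) : Set (Str n j) :=
  {b | ∃ (q : ℕ) (h : q < a.1.length), a.1.get ⟨q, h⟩ = CSym.mid ∧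
    b.1 = a.1.set q (if Even ((a.1.take q).count CSym.mid) then CSym.plus else CSym.minus)}

/-- The odd faces `a⁻` of `a ∈ ⟦n⟧_{j+1}`: replace the `i`-th occurrence of `⊙`
by `⊖` if `i` is odd, and by `⊕` if `i` is even. -/
def negF {n j : ℕ} (a : Str n (j+1)) : Set (Str n j) :=
  {b | ∃ (q : ℕ) (h : q < a.1.length), a.1.get ⟨q, h⟩ = CSym.mid ∧
    b.1 = a.1.set q (if Even ((a.1.take q).count CSym.mid) then CSym.minus else CSym.plus)}

def sPos {n j : ℕ} (ξ : Set (Str n (j+1))) : Set (Str n j) := ⋃ a ∈ ξ, posF a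
def sNeg {n j : ℕ} (ξ : Set (Str n (j+1))) : Set (Str n j) := ⋃ a ∈ ξ, negF a

/-- Append `⊖` to a string. -/
def appM {n j : ℕ} (a : Str n j) : Str (n+1) j :=
  ⟨a.1 ++ [CSym.minus], by
    refine ⟨by simp [a.2.1], ?_⟩
    simp [List.count_append, a.2.2, List.count_singleton]⟩

/-- Append `⊕` to a string. -/
def appP {n j : ℕ} (a : Str n j) : Str (n+1) j :=
  ⟨a.1 ++ [CSym.plus], by
    refine ⟨by simp [a.2.1], ?_⟩
    simp [List.count_append, a.2.2, List.count_singleton]⟩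

/-- Append `⊙` to a string. -/
def appO {n j : ℕ} (a : Str n j) : Str (n+1) (j+1) :=
  ⟨a.1 ++ [CSym.mid], by
    refine ⟨by simp [a.2.1], ?_⟩
    simp [List.count_append, a.2.2, List.count_singleton]⟩

/-- A subset of `⟦n⟧_{j+1}` is well-formed if distinct elements share no even
face and no odd face. -/
def WfC {n j : ℕ} (ξ : Set (Str n (j+1))) : Prop :=
  ∀ a ∈ ξ, ∀ b ∈ ξ, a ≠ b → posF a ∩ posF b = ∅ ∧ negF a ∩ negF b = ∅

/-- `ξ` moves `μ` to `π`. -/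
def MovesC {n j : ℕ} (ξ : Set (Str n (j+1))) (μ π : Set (Str n j)) : Prop :=
  π = (μ ∪ sPos ξ) \ sNeg ξ ∧ μ = (π ∪ sNeg ξ) \ sPos ξ

def gF (s t : CSym) {n j : ℕ} (a : Str n (j+1)) : Set (Str n j) :=
  {b | ∃ (q : ℕ) (h : q < a.1.length), a.1.get ⟨q, h⟩ = CSym.mid ∧
    b.1 = a.1.set q (if Even ((a.1.take q).count CSym.mid) then s else t)}


lemma gF_appO (s t : CSym) (hs : s ≠ CSym.mid) (ht : t ≠ CSym.mid) {n j : ℕ}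
    (a : Str n (j+1)) :
    gF s t (appO a) = appO '' gF s t a ∪
      {b | b.1 = a.1 ++ [if Even (j+1) then s else t]} := by
  obtain ⟨l, hlen, hcnt⟩ := a
  ext b
  simp only [gF, appO, Set.mem_union, Set.mem_setOf_eq, Set.mem_image]
  constructor
  · rintro ⟨q, hq, hget, hset⟩
    simp only [List.length_append, List.length_singleton] at hq
    rcases lt_or_eq_of_le (Nat.lt_succ_iff.mp hq) with hql | hql
    · left
      set v : CSym := if Even ((l.take q).count CSym.mid) then s else t with hv
      have hget' : l.get ⟨q, hql⟩ = CSym.mid := by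
        simpa [List.get_eq_getElem, List.getElem_append_left hql] using hget
      have hset' : b.1 = l.set q v ++ [CSym.mid] := by
        rw [hset]
        simp only [List.set_append_left _ _ hql,
          List.take_append_of_le_length (le_of_lt hql)]
        rfl
      have hvne : v ≠ CSym.mid := by
        rw [hv]; split <;> assumption
      have hlen' : (l.set q v).length = n := by simpa using hlen
      have hcnt' : (l.set q v).count CSym.mid = j := by
        have := b.2.2
        rw [hset', List.count_append, List.count_singleton] at this
        simpa using this
      refine ⟨⟨l.set q v, hlen', hcnt'⟩, ⟨q, hql, hget', rfl⟩, ?_⟩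
      exact Subtype.ext hset'.symm
    · right
      subst hql
      rw [hset]
      simp only [List.set_append_right _ _ le_rfl, List.take_left, hcnt,
        Nat.sub_self]
      simp
  · rintro (⟨x, ⟨q, hq, hget, hset⟩, rfl⟩ | hb)
    · refine ⟨q, by simp; omega, ?_, ?_⟩
      · simpa [List.get_eq_getElem, List.getElem_append_left hq] using hget
      · simp only [List.set_append_left _ _ hq,
          List.take_append_of_le_length (le_of_lt hq)]
        rw [hset]
    · refine ⟨l.length, by simp, by simp, ?_⟩
      rw [hb]
      simp only [List.set_append_right _ _ le_rfl, List.take_left, hcnt,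
        Nat.sub_self]
      simp

lemma gF_appC (s t c : CSym) (hc : c ≠ CSym.mid) {n j : ℕ}
    (a : Str n (j+1)) (pf : (a.1 ++ [c]).length = n+1 ∧ (a.1 ++ [c]).count CSym.mid = j+1) :
    gF s t (⟨a.1 ++ [c], pf⟩ : Str (n+1) (j+1)) =
      {b | ∃ x ∈ gF s t a, b.1 = x.1 ++ [c]} := by
  obtain ⟨l, hlen, hcnt⟩ := a
  ext b
  simp only [gF, Set.mem_setOf_eq]
  constructor
  · rintro ⟨q, hq, hget, hset⟩
    simp only [List.length_append, List.length_singleton] at hq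
    rcases lt_or_eq_of_le (Nat.lt_succ_iff.mp hq) with hql | hql
    · set v : CSym := if Even ((l.take q).count CSym.mid) then s else t with hv
      have hget' : l.get ⟨q, hql⟩ = CSym.mid := by
        simpa [List.get_eq_getElem, List.getElem_append_left hql] using hget
      have hset' : b.1 = l.set q v ++ [c] := by
        rw [hset]
        simp only [List.set_append_left _ _ hql,
          List.take_append_of_le_length (le_of_lt hql)]
        rfl
      have hlen' : (l.set q v).length = n := by simpa using hlen
      have hcnt' : (l.set q v).count CSym.mid = j := by
        have := b.2.2
        rw [hset', List.count_append] at this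
        have hc0 : List.count CSym.mid [c] = 0 := by
          cases c <;> simp_all
        omega
      exact ⟨⟨l.set q v, hlen', hcnt'⟩, ⟨q, hql, hget', rfl⟩, hset'⟩
    · exfalso
      subst hql
      apply hc
      simpa [List.get_eq_getElem] using hget
  · rintro ⟨x, ⟨q, hq, hget, hset⟩, hb⟩
    refine ⟨q, by simp; omega, ?_, ?_⟩
    · simpa [List.get_eq_getElem, List.getElem_append_left hq] using hget
    · simp only [List.set_append_left _ _ hq,
        List.take_append_of_le_length (le_of_lt hq)]
      rw [hb, hset]

lemma singleton_eq {n j : ℕ} (x : Str n j) :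
    {b : Str n j | b.1 = x.1} = {x} := by
  ext b
  simp only [Set.mem_setOf_eq, Set.mem_singleton_iff]
  exact ⟨fun h => Subtype.ext h, fun h => by rw [h]⟩

lemma setOf_appM {n j : ℕ} (S : Set (Str n j)) :
    {b : Str (n+1) j | ∃ x ∈ S, b.1 = x.1 ++ [CSym.minus]} = appM '' S := by
  ext b
  simp only [Set.mem_setOf_eq, Set.mem_image]
  constructor
  · rintro ⟨x, hx, hb⟩
    exact ⟨x, hx, Subtype.ext hb.symm⟩
  · rintro ⟨x, hx, rfl⟩
    exact ⟨x, hx, rfl⟩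

lemma setOf_appP {n j : ℕ} (S : Set (Str n j)) :
    {b : Str (n+1) j | ∃ x ∈ S, b.1 = x.1 ++ [CSym.plus]} = appP '' S := by
  ext b
  simp only [Set.mem_setOf_eq, Set.mem_image]
  constructor
  · rintro ⟨x, hx, hb⟩
    exact ⟨x, hx, Subtype.ext hb.symm⟩
  · rintro ⟨x, hx, rfl⟩
    exact ⟨x, hx, rfl⟩

lemma lift_union {A B C : Type*} (ξ : Set A) (F : A → Set C) (G : A → Set B)
    (g : B → C) (x : A → C) (h : ∀ a, F a = g '' G a ∪ {x a}) :
    (⋃ a ∈ ξ, F a) = g '' (⋃ a ∈ ξ, G a) ∪ x '' ξ := by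
  ext b
  simp only [h, Set.mem_iUnion, Set.mem_union, Set.mem_image,
    Set.mem_singleton_iff]
  constructor
  · rintro ⟨a, ha, ⟨y, hy, rfl⟩ | rfl⟩
    · exact Or.inl ⟨y, ⟨a, ha, hy⟩, rfl⟩
    · exact Or.inr ⟨a, ha, rfl⟩
  · rintro (⟨y, ⟨a, ha, hy⟩, rfl⟩ | ⟨a, ha, rfl⟩)
    · exact ⟨a, ha, Or.inl ⟨y, hy, rfl⟩⟩
    · exact ⟨a, ha, Or.inr rfl⟩

lemma lift_img {A B C : Type*} (ξ : Set A) (F : A → Set C) (G : A → Set B)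
    (g : B → C) (h : ∀ a, F a = g '' G a) :
    (⋃ a ∈ ξ, F a) = g '' (⋃ a ∈ ξ, G a) := by
  ext b
  simp only [h, Set.mem_iUnion, Set.mem_image]
  constructor
  · rintro ⟨a, ha, y, hy, rfl⟩
    exact ⟨y, ⟨a, ha, hy⟩, rfl⟩
  · rintro ⟨y, ⟨a, ha, hy⟩, rfl⟩
    exact ⟨a, ha, y, hy, rfl⟩

lemma posF_eq {n j : ℕ} (a : Str n (j+1)) :
    posF a = gF CSym.plus CSym.minus a := rfl

lemma negF_eq {n j : ℕ} (a : Str n (j+1)) :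
    negF a = gF CSym.minus CSym.plus a := rfl

lemma posF_appO_even {n j : ℕ} (he : Even (j+1)) (a : Str n (j+1)) :
    posF (appO a) = appO '' posF a ∪ {appP a} := by
  show gF CSym.plus CSym.minus (appO a) =
    appO '' gF CSym.plus CSym.minus a ∪ {appP a}
  rw [gF_appO _ _ (by rintro ⟨⟩) (by rintro ⟨⟩) a]
  congr 1
  rw [if_pos he]
  exact singleton_eq (appP a)

lemma posF_appO_odd {n j : ℕ} (he : ¬ Even (j+1)) (a : Str n (j+1)) :
    posF (appO a) = appO '' posF a ∪ {appM a} := by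
  show gF CSym.plus CSym.minus (appO a) =
    appO '' gF CSym.plus CSym.minus a ∪ {appM a}
  rw [gF_appO _ _ (by rintro ⟨⟩) (by rintro ⟨⟩) a]
  congr 1
  rw [if_neg he]
  exact singleton_eq (appM a)

lemma negF_appO_even {n j : ℕ} (he : Even (j+1)) (a : Str n (j+1)) :
    negF (appO a) = appO '' negF a ∪ {appM a} := by
  show gF CSym.minus CSym.plus (appO a) =
    appO '' gF CSym.minus CSym.plus a ∪ {appM a}
  rw [gF_appO _ _ (by rintro ⟨⟩) (by rintro ⟨⟩) a]
  congr 1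
  rw [if_pos he]
  exact singleton_eq (appM a)

lemma negF_appO_odd {n j : ℕ} (he : ¬ Even (j+1)) (a : Str n (j+1)) :
    negF (appO a) = appO '' negF a ∪ {appP a} := by
  show gF CSym.minus CSym.plus (appO a) =
    appO '' gF CSym.minus CSym.plus a ∪ {appP a}
  rw [gF_appO _ _ (by rintro ⟨⟩) (by rintro ⟨⟩) a]
  congr 1
  rw [if_neg he]
  exact singleton_eq (appP a)

lemma posF_appM' {n j : ℕ} (a : Str n (j+1)) :
    posF (appM a) = appM '' posF a := by
  show gF CSym.plus CSym.minus
      (⟨a.1 ++ [CSym.minus], (appM a).2⟩ : Str (n+1) (j+1)) =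
    appM '' gF CSym.plus CSym.minus a
  rw [gF_appC _ _ CSym.minus (by rintro ⟨⟩) a (appM a).2]
  exact setOf_appM _

lemma negF_appM' {n j : ℕ} (a : Str n (j+1)) :
    negF (appM a) = appM '' negF a := by
  show gF CSym.minus CSym.plus
      (⟨a.1 ++ [CSym.minus], (appM a).2⟩ : Str (n+1) (j+1)) =
    appM '' gF CSym.minus CSym.plus a
  rw [gF_appC _ _ CSym.minus (by rintro ⟨⟩) a (appM a).2]
  exact setOf_appM _

lemma posF_appP' {n j : ℕ} (a : Str n (j+1)) :
    posF (appP a) = appP '' posF a := by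
  show gF CSym.plus CSym.minus
      (⟨a.1 ++ [CSym.plus], (appP a).2⟩ : Str (n+1) (j+1)) =
    appP '' gF CSym.plus CSym.minus a
  rw [gF_appC _ _ CSym.plus (by rintro ⟨⟩) a (appP a).2]
  exact setOf_appP _

lemma negF_appP' {n j : ℕ} (a : Str n (j+1)) :
    negF (appP a) = appP '' negF a := by
  show gF CSym.minus CSym.plus
      (⟨a.1 ++ [CSym.plus], (appP a).2⟩ : Str (n+1) (j+1)) =
    appP '' gF CSym.minus CSym.plus a
  rw [gF_appC _ _ CSym.plus (by rintro ⟨⟩) a (appP a).2]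
  exact setOf_appP _


/-- Equation (14) of Buckley–Garner: faces of `ξ⊙`, together with
`(ξη)^ε = (ξ^ε)η` for `η ∈ {⊖,⊕}`. -/
theorem cube_append_faces (n j : ℕ) (ξ : Set (Str n (j+1))) (hfin : ξ.Finite) :
    ((Even (j+1) →
        sPos (appO '' ξ) = appO '' sPos ξ ∪ appP '' ξ ∧
        sNeg (appO '' ξ) = appO '' sNeg ξ ∪ appM '' ξ) ∧
     (Odd (j+1) →
        sPos (appO '' ξ) = appO '' sPos ξ ∪ appM '' ξ ∧
        sNeg (appO '' ξ) = appO '' sNeg ξ ∪ appP '' ξ)) ∧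
    (sPos (appM '' ξ) = appM '' sPos ξ ∧ sNeg (appM '' ξ) = appM '' sNeg ξ ∧
     sPos (appP '' ξ) = appP '' sPos ξ ∧ sNeg (appP '' ξ) = appP '' sNeg ξ) := by
  have hO : ∀ (he : Even (j+1)),
      sPos (appO '' ξ) = appO '' sPos ξ ∪ appP '' ξ ∧
      sNeg (appO '' ξ) = appO '' sNeg ξ ∪ appM '' ξ := by
    intro he
    constructor
    · rw [show sPos (appO '' ξ) = ⋃ a ∈ ξ, posF (appO a) from
        Set.biUnion_image,
        lift_union ξ _ posF appO appP (posF_appO_even he)]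
      rfl
    · rw [show sNeg (appO '' ξ) = ⋃ a ∈ ξ, negF (appO a) from
        Set.biUnion_image,
        lift_union ξ _ negF appO appM (negF_appO_even he)]
      rfl
  have hO' : ∀ (ho : ¬ Even (j+1)),
      sPos (appO '' ξ) = appO '' sPos ξ ∪ appM '' ξ ∧
      sNeg (appO '' ξ) = appO '' sNeg ξ ∪ appP '' ξ := by
    intro ho
    constructor
    · rw [show sPos (appO '' ξ) = ⋃ a ∈ ξ, posF (appO a) from
        Set.biUnion_image,
        lift_union ξ _ posF appO appM (posF_appO_odd ho)]
      rfl
    · rw [show sNeg (appO '' ξ) = ⋃ a ∈ ξ, negF (appO a) from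
        Set.biUnion_image,
        lift_union ξ _ negF appO appP (negF_appO_odd ho)]
      rfl
  refine ⟨⟨hO, fun ho => hO' (Nat.not_even_iff_odd.mpr ho)⟩, ?_, ?_, ?_, ?_⟩
  · rw [show sPos (appM '' ξ) = ⋃ a ∈ ξ, posF (appM a) from
      Set.biUnion_image, lift_img ξ _ posF appM posF_appM']
    rfl
  · rw [show sNeg (appM '' ξ) = ⋃ a ∈ ξ, negF (appM a) from
      Set.biUnion_image, lift_img ξ _ negF appM negF_appM']
    rfl
  · rw [show sPos (appP '' ξ) = ⋃ a ∈ ξ, posF (appP a) from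
      Set.biUnion_image, lift_img ξ _ posF appP posF_appP']
    rfl
  · rw [show sNeg (appP '' ξ) = ⋃ a ∈ ξ, negF (appP a) from
      Set.biUnion_image, lift_img ξ _ negF appP negF_appP']
    rfl
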